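/- arXiv:1909.05526 — 4 statements merged into one kernel-verified Lean document; each statement's English description precedes it below -/
import Mathlib

section
/- Let X and Y be vector spaces and let (f_i)_{i∈I} and (g_j)_{j∈J} be families of linear functionals on X and Y respectively. Then, inside the algebraic tensor product X ⊗ Y, one has ⋂_{i,j} ker(f_i ⊗ g_j) = (⋂_i ker f_i) ⊗ Y + X ⊗ (⋂_j ker g_j). -/
open TensorProduct

/-- Separation lemma: if the `f i` separate points of `X` and the `g j` separate points of `Y`,
then the `f i ⊗ g j` separate points of `X ⊗ Y`. -/
theorem sep_lemma
    {k X Y : Type*} [Field k] [AddCommGroup X] [Module k X] [AddCommGroup Y] [Module k Y]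
    {I J : Type*} (f : I → (X →ₗ[k] k)) (g : J → (Y →ₗ[k] k))
    (hf : (⨅ i, LinearMap.ker (f i)) = ⊥) (hg : (⨅ j, LinearMap.ker (g j)) = ⊥)
    (t : X ⊗[k] Y) (ht : ∀ i j, TensorProduct.map (f i) (g j) t = 0) : t = 0 := by
  classical
  obtain ⟨ι, b⟩ := Module.Free.exists_basis (R := k) (M := Y)
  set e : X ⊗[k] Y ≃ₗ[k] (ι →₀ X) :=
    (TensorProduct.congr (LinearEquiv.refl k X) b.repr) ≪≫ₗ finsuppScalarRight k k X ι with he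
  set c : ι →₀ X := e t with hc
  -- t = sum over c
  have hts : t = c.sum fun i x => x ⊗ₜ[k] b i := by
    apply e.injective
    rw [map_finsuppSum, ← hc]
    have : ∀ i x, e (x ⊗ₜ[k] b i) = Finsupp.single i x := by
      intro i x
      simp only [he, LinearEquiv.trans_apply, TensorProduct.congr_tmul,
        LinearEquiv.refl_apply, Module.Basis.repr_self, finsuppScalarRight_apply_tmul]
      rw [Finsupp.sum_single_index (by simp), one_smul]
    simp only [this, Finsupp.sum_single]
  -- the key elements
  have key : ∀ i ι', f i (c ι') = 0 := by
    intro i ι'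
    have hy : (c.sum fun ι' x => f i x • b ι') = 0 := by
      rw [← Submodule.mem_bot (R := k), ← hg, Submodule.mem_iInf]
      intro j
      rw [LinearMap.mem_ker, map_finsuppSum]
      have h0 := ht i j
      rw [hts, map_finsuppSum] at h0
      have h1 := congrArg (TensorProduct.lid k k) h0
      rw [map_finsuppSum] at h1
      simpa [TensorProduct.lid_tmul, smul_eq_mul, mul_comm] using h1
    by_cases hmem : ι' ∈ c.support
    · refine linearIndependent_iff'.mp b.linearIndependent c.support
        (fun ι' => f i (c ι')) ?_ ι' hmem
      rw [Finsupp.sum] at hy; exact hy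
    · simp [Finsupp.notMem_support_iff.mp hmem]
  have hc0 : c = 0 := by
    ext ι'
    have : c ι' ∈ (⨅ i, LinearMap.ker (f i)) := Submodule.mem_iInf _ |>.mpr fun i => key i ι'
    simpa [hf] using this
  rw [hts, hc0]; simp

/-- For families of linear functionals `(f i)` on `X` and `(g j)` on `Y`, the intersection
of the kernels of the functionals `f i ⊗ g j` on `X ⊗ Y` equals
`(⋂ᵢ ker fᵢ) ⊗ Y + X ⊗ (⋂ⱼ ker gⱼ)`. -/
theorem iInf_ker_tensor_eq
    {k X Y : Type*} [Field k] [AddCommGroup X] [Module k X] [AddCommGroup Y] [Module k Y]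
    {I J : Type*} (f : I → (X →ₗ[k] k)) (g : J → (Y →ₗ[k] k)) :
    (⨅ (i : I) (j : J), LinearMap.ker
        ((TensorProduct.lid k k).toLinearMap ∘ₗ TensorProduct.map (f i) (g j))) =
      LinearMap.range (LinearMap.rTensor Y (⨅ i, LinearMap.ker (f i)).subtype) ⊔
        LinearMap.range (LinearMap.lTensor X (⨅ j, LinearMap.ker (g j)).subtype) := by
  set A := ⨅ i, LinearMap.ker (f i) with hA
  set B := ⨅ j, LinearMap.ker (g j) with hB
  let fbar : I → (X ⧸ A →ₗ[k] k) := fun i => A.liftQ (f i) (hA ▸ iInf_le _ i)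
  let gbar : J → (Y ⧸ B →ₗ[k] k) := fun j => B.liftQ (g j) (hB ▸ iInf_le _ j)
  have hfbar : (⨅ i, LinearMap.ker (fbar i)) = ⊥ := by
    rw [eq_bot_iff]
    intro t ht
    obtain ⟨x, rfl⟩ := A.mkQ_surjective t
    simp only [Submodule.mem_iInf, LinearMap.mem_ker, fbar, Submodule.mkQ_apply,
      Submodule.liftQ_apply] at ht
    have hx : x ∈ A := hA ▸ (Submodule.mem_iInf _).mpr fun i => ht i
    simpa [Submodule.Quotient.mk_eq_zero] using hx
  have hgbar : (⨅ j, LinearMap.ker (gbar j)) = ⊥ := by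
    rw [eq_bot_iff]
    intro t ht
    obtain ⟨y, rfl⟩ := B.mkQ_surjective t
    simp only [Submodule.mem_iInf, LinearMap.mem_ker, gbar, Submodule.mkQ_apply,
      Submodule.liftQ_apply] at ht
    have hy : y ∈ B := hB ▸ (Submodule.mem_iInf _).mpr fun j => ht j
    simpa [Submodule.Quotient.mk_eq_zero] using hy
  have hcomp : ∀ i j, TensorProduct.map (f i) (g j) =
      TensorProduct.map (fbar i) (gbar j) ∘ₗ TensorProduct.map A.mkQ B.mkQ := by
    intro i j
    rw [← TensorProduct.map_comp]
    congr 1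
  have hker : LinearMap.ker (TensorProduct.map A.mkQ B.mkQ) =
      LinearMap.range (LinearMap.lTensor X B.subtype) ⊔
        LinearMap.range (LinearMap.rTensor Y A.subtype) :=
    TensorProduct.map_ker (LinearMap.exact_subtype_mkQ A) A.mkQ_surjective
      (LinearMap.exact_subtype_mkQ B) B.mkQ_surjective
  have main : (⨅ (i : I) (j : J), LinearMap.ker
        ((TensorProduct.lid k k).toLinearMap ∘ₗ TensorProduct.map (f i) (g j))) =
      LinearMap.ker (TensorProduct.map A.mkQ B.mkQ) := by
    ext t
    simp only [Submodule.mem_iInf, LinearMap.mem_ker, LinearMap.comp_apply,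
      LinearEquiv.coe_coe]
    constructor
    · intro ht
      apply sep_lemma fbar gbar hfbar hgbar
      intro i j
      rw [← LinearMap.comp_apply, ← hcomp]
      exact (map_eq_zero_iff _ (TensorProduct.lid k k).injective).mp (ht i j)
    · intro ht i j
      rw [hcomp, LinearMap.comp_apply, ht]
      simp
  rw [main, hker, sup_comm]
end

section
/- Let A be the symmetric algebra of a finite-dimensional vector space B over ℝ, and let Φ ⊆ B* be a linear subspace of the dual of B. For f ∈ B*, let f_* denote the unique algebra character of A extending f. Then the ideal of A generated by ⋂_{φ∈Φ} ker φ (as a subspace of B) equals ⋂_{φ∈Φ} ker φ_*. -/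
open MvPolynomial

/-- The canonical linear embedding of the finite-dimensional vector space `Fin n → ℝ`
into its symmetric algebra, realised as the polynomial algebra `MvPolynomial (Fin n) ℝ`. -/
noncomputable def symIota (n : ℕ) (b : Fin n → ℝ) : MvPolynomial (Fin n) ℝ :=
  ∑ i, b i • (X i : MvPolynomial (Fin n) ℝ)

/-- The unique algebra character of the symmetric algebra `Sym(B) = MvPolynomial (Fin n) ℝ`
extending a linear functional `φ` on `B = Fin n → ℝ` (namely evaluation at the point
`(φ eᵢ)ᵢ`). -/
noncomputable def charExt {n : ℕ} (φ : Module.Dual ℝ (Fin n → ℝ)) :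
    MvPolynomial (Fin n) ℝ →ₐ[ℝ] ℝ :=
  MvPolynomial.aeval (fun i => φ (Pi.single i 1))

-- basic lemmas
lemma eval_symIota {n : ℕ} (y : Fin n → ℝ) (b : Fin n → ℝ) :
    eval y (symIota n b) = ∑ i, b i * y i := by
  simp [symIota, smul_eq_mul]

lemma dual_apply_eq_sum {n : ℕ} (φ : Module.Dual ℝ (Fin n → ℝ)) (b : Fin n → ℝ) :
    φ b = ∑ i, b i * φ (Pi.single i 1) := by
  conv_lhs => rw [show b = ∑ i, b i • (Pi.single i 1 : Fin n → ℝ) by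
    simp only [← Pi.single_smul, smul_eq_mul, mul_one, Finset.univ_sum_single]]
  simp [smul_eq_mul]

lemma charExt_eq_eval {n : ℕ} (φ : Module.Dual ℝ (Fin n → ℝ)) (p : MvPolynomial (Fin n) ℝ) :
    charExt φ p = eval (fun i => φ (Pi.single i 1)) p := by
  rw [charExt, ← coe_aeval_eq_eval]
  rfl

lemma charExt_symIota {n : ℕ} (φ : Module.Dual ℝ (Fin n → ℝ)) (b : Fin n → ℝ) :
    charExt φ (symIota n b) = φ b := by
  rw [charExt_eq_eval, eval_symIota, dual_apply_eq_sum]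

lemma symIota_sum {n : ℕ} {ι : Type*} (s : Finset ι) (c : ι → ℝ) (v : ι → Fin n → ℝ) :
    symIota n (∑ i ∈ s, c i • v i) = ∑ i ∈ s, c i • symIota n (v i) := by
  simp only [symIota, Finset.smul_sum, Finset.sum_apply, Pi.smul_apply, smul_eq_mul,
    ← smul_smul, Finset.sum_smul]
  rw [Finset.sum_comm]

lemma symIota_single {n : ℕ} (j : Fin n) : symIota n (Pi.single j 1) = X j := by
  simp [symIota, Pi.single_apply]

lemma mem_span_X_of_vanishing {m : Type*} [Fintype m] (S : Set m)
    (q : MvPolynomial m ℝ) (h : ∀ y : m → ℝ, (∀ i ∈ S, y i = 0) → eval y q = 0) :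
    q ∈ Ideal.span (X '' S : Set (MvPolynomial m ℝ)) := by
  classical
  set P : (m →₀ ℕ) → Prop := fun d => ∃ i ∈ S, d i ≠ 0 with hP
  set q₁ : MvPolynomial m ℝ := ∑ d ∈ q.support.filter P, monomial d (coeff d q) with hq₁
  set q₂ : MvPolynomial m ℝ := ∑ d ∈ q.support.filter (fun d => ¬ P d),
    monomial d (coeff d q) with hq₂
  have hsplit : q = q₁ + q₂ := by
    rw [hq₁, hq₂, Finset.sum_filter_add_sum_filter_not]
    exact (MvPolynomial.as_sum q)
  have hq₂0 : q₂ = 0 := by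
    apply MvPolynomial.funext
    intro y
    rw [map_zero]
    set y' : m → ℝ := fun i => if i ∈ S then 0 else y i with hy'
    have h1 : eval y' q = 0 := h y' (fun i hi => if_pos hi)
    have h2 : eval y' q₁ = 0 := by
      rw [hq₁, map_sum]
      apply Finset.sum_eq_zero
      intro d hd
      obtain ⟨i, hiS, hdi⟩ := (Finset.mem_filter.mp hd).2
      rw [eval_monomial]
      apply mul_eq_zero_of_right
      rw [Finsupp.prod]
      apply Finset.prod_eq_zero (Finsupp.mem_support_iff.mpr hdi)
      simp [hy', if_pos hiS, zero_pow hdi]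
    have h3 : eval y q₂ = eval y' q₂ := by
      rw [hq₂, map_sum, map_sum]
      apply Finset.sum_congr rfl
      intro d hd
      have hnP : ¬ P d := (Finset.mem_filter.mp hd).2
      rw [eval_monomial, eval_monomial]
      congr 1
      rw [Finsupp.prod, Finsupp.prod]
      apply Finset.prod_congr rfl
      intro i hi
      have hiS : i ∉ S := fun hmem => hnP ⟨i, hmem, Finsupp.mem_support_iff.mp hi⟩
      simp [hy', if_neg hiS]
    have := hsplit ▸ h1
    rw [map_add, h2, zero_add] at this
    rw [h3, this]
  have hq₁mem : q₁ ∈ Ideal.span (X '' S : Set (MvPolynomial m ℝ)) := by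
    rw [mem_ideal_span_X_image]
    intro d hd
    by_contra hcon
    push_neg at hcon
    apply MvPolynomial.mem_support_iff.mp hd
    rw [hq₁, MvPolynomial.coeff_sum]
    apply Finset.sum_eq_zero
    intro e he
    rw [coeff_monomial]
    split
    · next heq =>
      subst heq
      obtain ⟨i, hiS, hei⟩ := (Finset.mem_filter.mp he).2
      exact absurd (hcon i hiS) hei
    · rfl
  rw [hsplit, hq₂0, add_zero]
  exact hq₁mem

lemma pi_single_sum {n : ℕ} (x : Fin n → ℝ) :
    x = ∑ j, x j • (Pi.single j 1 : Fin n → ℝ) := by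
  simp only [← Pi.single_smul, smul_eq_mul, mul_one, Finset.univ_sum_single]

noncomputable def dpt (n : ℕ) : Module.Dual ℝ (Fin n → ℝ) →ₗ[ℝ] EuclideanSpace ℝ (Fin n) where
  toFun φ := WithLp.toLp 2 (fun i => φ (Pi.single i 1))
  map_add' φ ψ := rfl
  map_smul' c φ := rfl

lemma inner_dpt {n : ℕ} (φ : Module.Dual ℝ (Fin n → ℝ)) (b : EuclideanSpace ℝ (Fin n)) :
    (inner ℝ (dpt n φ) b : ℝ) = φ b := by
  rw [dual_apply_eq_sum φ b]
  simp [dpt, PiLp.inner_apply, RCLike.inner_apply, mul_comm, LinearMap.coe_mk, AddHom.coe_mk]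
  rfl

lemma main_hard {n : ℕ} (Φ : Submodule ℝ (Module.Dual ℝ (Fin n → ℝ)))
    (p : MvPolynomial (Fin n) ℝ) (hp : ∀ φ ∈ Φ, charExt φ p = 0) :
    p ∈ Ideal.span (symIota n '' {b : Fin n → ℝ | ∀ φ ∈ Φ, φ b = 0}) := by
  classical
  set V : Submodule ℝ (EuclideanSpace ℝ (Fin n)) := Φ.map (dpt n) with hV
  have hVperp : ∀ b : EuclideanSpace ℝ (Fin n), b ∈ Vᗮ ↔ ∀ φ ∈ Φ, φ b = 0 := by
    intro b
    rw [Submodule.mem_orthogonal]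
    constructor
    · intro hb φ hφ
      rw [← inner_dpt]
      exact hb _ (Submodule.mem_map_of_mem hφ)
    · rintro hb u ⟨φ, hφ, rfl⟩
      rw [inner_dpt]
      exact hb φ hφ
  have hoo : Vᗮᗮ = V := V.orthogonal_orthogonal
  have hcompl : IsCompl Vᗮ V := Submodule.isCompl_orthogonal_of_hasOrthogonalProjection.symm
  set bK := Module.finBasis ℝ (Vᗮ : Submodule ℝ (EuclideanSpace ℝ (Fin n))) with hbK
  set bV := Module.finBasis ℝ (V : Submodule ℝ (EuclideanSpace ℝ (Fin n))) with hbV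
  set u : Module.Basis _ ℝ (EuclideanSpace ℝ (Fin n)) :=
    (bK.prod bV).map (Submodule.prodEquivOfIsCompl _ _ hcompl) with hu
  -- u (inl i) lies in Vᗮ
  have hu_inl : ∀ i, u (Sum.inl i) ∈ Vᗮ := by
    intro i
    rw [hu, Module.Basis.map_apply]
    have : (bK.prod bV) (Sum.inl i) = (bK i, 0) :=
      Prod.ext (Module.Basis.prod_apply_inl_fst _ _ _) (Module.Basis.prod_apply_inl_snd _ _ _)
    rw [this, Submodule.coe_prodEquivOfIsCompl']
    simp
  -- coords of elements of Vᗮ vanish on inr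
  have hrepr_inr : ∀ x ∈ Vᗮ, ∀ j, u.repr x (Sum.inr j) = 0 := by
    intro x hx j
    rw [hu, Module.Basis.map_repr]
    simp only [LinearEquiv.trans_apply]
    have h1 : (Vᗮ.prodEquivOfIsCompl V hcompl).symm x = (⟨x, hx⟩, 0) :=
      Submodule.prodEquivOfIsCompl_symm_apply_left (p := Vᗮ) (q := V) hcompl ⟨x, hx⟩
    rw [h1, Module.Basis.prod_repr_inr]
    simp
  -- repr as inner-like sum
  have hx_repr : ∀ (x : EuclideanSpace ℝ (Fin n)) (i), u.repr x i
      = ∑ j, x j * u.repr (WithLp.toLp 2 (Pi.single j 1)) i := by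
    intro x i
    conv_lhs => rw [show x = ∑ j, x j • (WithLp.toLp 2 (Pi.single j 1) : EuclideanSpace ℝ (Fin n)) by
      ext k; simp [Pi.single_apply]]
    rw [map_sum, Finsupp.finset_sum_apply]
    simp [smul_eq_mul]
  -- change of variables
  set σf : MvPolynomial (Fin (Module.finrank ℝ ↥Vᗮ) ⊕ Fin (Module.finrank ℝ ↥V)) ℝ →ₐ[ℝ]
      MvPolynomial (Fin n) ℝ := aeval (fun i => symIota n (u i)) with hσf
  set gs : Fin n → MvPolynomial (Fin (Module.finrank ℝ ↥Vᗮ) ⊕ Fin (Module.finrank ℝ ↥V)) ℝ :=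
    fun j => ∑ i, u.repr (WithLp.toLp 2 (Pi.single j 1)) i • X i with hgs
  have hcomp : ∀ j, σf (gs j) = X j := by
    intro j
    rw [hgs]
    simp only [map_sum, map_smul, hσf, aeval_X]
    rw [← symIota_sum]
    rw [show (∑ i, u.repr (WithLp.toLp 2 (Pi.single j 1)) i • (u i : Fin n → ℝ)) = Pi.single j 1 by
      have := congrArg WithLp.ofLp (u.sum_repr (WithLp.toLp 2 (Pi.single j 1))); simp only [WithLp.ofLp_sum, WithLp.ofLp_smul] at this; exact this,
      symIota_single]
  have hfg : ∀ r, σf ((aeval (R := ℝ) gs) r) = r := by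
    intro r
    have hc : σf.comp (aeval (R := ℝ) gs) = AlgHom.id ℝ (MvPolynomial (Fin n) ℝ) := by
      apply MvPolynomial.algHom_ext
      intro j
      simp only [AlgHom.comp_apply, AlgHom.id_apply, aeval_X]
      exact hcomp j
    calc σf ((aeval (R := ℝ) gs) r) = (σf.comp (aeval (R := ℝ) gs)) r := rfl
    _ = r := by rw [hc]; rfl
  have hvanish : ∀ y, (∀ i ∈ Set.range (Sum.inl : Fin (Module.finrank ℝ ↥Vᗮ) →
      Fin (Module.finrank ℝ ↥Vᗮ) ⊕ Fin (Module.finrank ℝ ↥V)), y i = 0) →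
      eval y ((aeval (R := ℝ) gs) p) = 0 := by
    intro y hy
    set w : EuclideanSpace ℝ (Fin n) := WithLp.toLp 2 (fun j => ∑ i, u.repr (WithLp.toLp 2 (Pi.single j 1)) i * y i) with hw
    have e1 : eval y ((aeval (R := ℝ) gs) p) = eval w p := by
      have h2 : (aeval (R := ℝ) y).comp (aeval (R := ℝ) gs) = aeval (fun j => aeval (R := ℝ) y (gs j)) :=
        MvPolynomial.comp_aeval gs (aeval (R := ℝ) y)
      have h3 : (fun j => aeval (R := ℝ) y (gs j)) = w := by
        funext j
        rw [hgs, hw]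
        simp [smul_eq_mul]
      calc eval y ((aeval (R := ℝ) gs) p) = (aeval (R := ℝ) y) ((aeval (R := ℝ) gs) p) := by rw [← coe_aeval_eq_eval]; rfl
      _ = aeval (fun j => aeval (R := ℝ) y (gs j)) p := AlgHom.congr_fun h2 p
      _ = aeval (R := ℝ) w p := by rw [h3]
      _ = eval w p := by rw [← coe_aeval_eq_eval]; rfl
    have hwV : w ∈ V := by
      rw [← hoo, Submodule.mem_orthogonal]
      intro x hx
      have hinner : (inner ℝ x w : ℝ) = ∑ i, y i * u.repr x i := by
        simp only [PiLp.inner_apply, RCLike.inner_apply, conj_trivial]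
        conv_lhs => enter [2, j]; rw [mul_comm]
        calc ∑ j, x j * w j = ∑ j, ∑ i, y i * (x j * u.repr (WithLp.toLp 2 (Pi.single j 1)) i) := by
              refine Finset.sum_congr rfl fun j _ => ?_
              rw [hw, Finset.mul_sum]
              refine Finset.sum_congr rfl fun i _ => by ring
        _ = ∑ i, ∑ j, y i * (x j * u.repr (WithLp.toLp 2 (Pi.single j 1)) i) := Finset.sum_comm
        _ = ∑ i, y i * u.repr x i := by
              refine Finset.sum_congr rfl fun i _ => ?_
              rw [← Finset.mul_sum, ← hx_repr x i]
      rw [hinner]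
      apply Finset.sum_eq_zero
      intro i _
      cases i with
      | inl i => rw [hy _ ⟨i, rfl⟩, zero_mul]
      | inr i => rw [hrepr_inr x hx i, mul_zero]
    rw [e1]
    obtain ⟨φ, hφ, hdw⟩ := hwV
    have := hp φ hφ
    rw [charExt_eq_eval] at this
    rw [← hdw]
    exact this
  have hqmem := mem_span_X_of_vanishing (Set.range Sum.inl) ((aeval (R := ℝ) gs) p) hvanish
  have hpmem : p ∈ Ideal.map σf (Ideal.span (X '' Set.range Sum.inl)) := by
    rw [← hfg p]
    exact Ideal.mem_map_of_mem σf hqmem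
  rw [Ideal.map_span] at hpmem
  refine Ideal.span_mono ?_ hpmem
  rintro _ ⟨_, ⟨_, ⟨i, rfl⟩, rfl⟩, rfl⟩
  refine ⟨u (Sum.inl i), (hVperp _).mp (hu_inl i), ?_⟩
  rw [hσf, aeval_X]


/-- For a linear subspace `Φ` of the dual of the finite-dimensional space `B = Fin n → ℝ`,
the ideal of the symmetric algebra of `B` generated by `⋂_{φ ∈ Φ} ker φ ⊆ B` equals the
intersection of the kernels of the characters extending the elements of `Φ`. -/
theorem ideal_span_inter_ker_eq_iInf_ker_charExt (n : ℕ)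
    (Φ : Submodule ℝ (Module.Dual ℝ (Fin n → ℝ))) :
    Ideal.span (symIota n '' {b : Fin n → ℝ | ∀ φ ∈ Φ, φ b = 0}) =
      ⨅ φ ∈ Φ, RingHom.ker (charExt φ) := by
  apply le_antisymm
  · rw [Ideal.span_le]
    rintro _ ⟨b, hb, rfl⟩
    simp only [SetLike.mem_coe, Submodule.mem_iInf]
    intro φ hφ
    rw [RingHom.mem_ker, charExt_symIota]
    exact hb φ hφ
  · intro p hp
    apply main_hard
    intro φ hφ
    simp only [Submodule.mem_iInf] at hp
    have := hp φ hφ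
    rwa [RingHom.mem_ker] at this
end

section
/- Let r ≥ 2, let θ > 0, and let N_1 ≥ N_2 ≥ … ≥ N_r ≥ 1 be integers. Then Σ_{n_1=0}^{N_1−1} ⋯ Σ_{n_r=0}^{N_r−1} 2^{−θ (max_i n_i − min_i n_i)} ≤ C(θ, r) · N_2 N_3 ⋯ N_r, where C(θ, r) is a constant depending only on θ and r (and not on the N_i). -/
open Finset

private lemma geom_aux (q : ℝ) (hq0 : 0 ≤ q) (hq1 : q < 1) (M b : ℕ) :
    ∑ a ∈ Finset.range M, q ^ (max a b - min a b) ≤ 2 * (1 - q)⁻¹ := by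
  have hsum : Summable (fun k : ℕ => q ^ k) := summable_geometric_of_lt_one hq0 hq1
  have htsum : ∑' k : ℕ, q ^ k = (1 - q)⁻¹ := tsum_geometric_of_lt_one hq0 hq1
  have hpos : ∀ k : ℕ, (0:ℝ) ≤ q ^ k := fun k => pow_nonneg hq0 k
  rw [← Finset.sum_filter_add_sum_filter_not (Finset.range M) (fun a => a ≤ b), two_mul]
  have h1 : ∑ a ∈ (Finset.range M).filter (fun a => a ≤ b), q ^ (max a b - min a b)
      ≤ (1 - q)⁻¹ := by
    have e1 : ∑ a ∈ (Finset.range M).filter (fun a => a ≤ b), q ^ (max a b - min a b)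
        = ∑ a ∈ (Finset.range M).filter (fun a => a ≤ b), q ^ (b - a) := by
      refine Finset.sum_congr rfl fun a ha => ?_
      simp only [Finset.mem_filter] at ha
      rw [max_eq_right ha.2, min_eq_left ha.2]
    have e2 : ∑ a ∈ (Finset.range M).filter (fun a => a ≤ b), q ^ (b - a)
        = ∑ k ∈ ((Finset.range M).filter (fun a => a ≤ b)).image (fun a => b - a), q ^ k := by
      rw [Finset.sum_image]
      intro x hx y hy h
      simp only [Finset.mem_coe, Finset.mem_filter] at hx hy h
      omega
    rw [e1, e2, ← htsum]
    exact Summable.sum_le_tsum _ (fun k _ => hpos k) hsum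
  have h2 : ∑ a ∈ (Finset.range M).filter (fun a => ¬ a ≤ b), q ^ (max a b - min a b)
      ≤ (1 - q)⁻¹ := by
    have e1 : ∑ a ∈ (Finset.range M).filter (fun a => ¬ a ≤ b), q ^ (max a b - min a b)
        = ∑ a ∈ (Finset.range M).filter (fun a => ¬ a ≤ b), q ^ (a - b) := by
      refine Finset.sum_congr rfl fun a ha => ?_
      simp only [Finset.mem_filter] at ha
      have : b ≤ a := by omega
      rw [max_eq_left this, min_eq_right this]
    have e2 : ∑ a ∈ (Finset.range M).filter (fun a => ¬ a ≤ b), q ^ (a - b)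
        = ∑ k ∈ ((Finset.range M).filter (fun a => ¬ a ≤ b)).image (fun a => a - b), q ^ k := by
      rw [Finset.sum_image]
      intro x hx y hy h
      simp only [Finset.mem_coe, Finset.mem_filter] at hx hy h
      omega
    rw [e1, e2, ← htsum]
    exact Summable.sum_le_tsum _ (fun k _ => hpos k) hsum
  exact add_le_add h1 h2

/-- For `r ≥ 2`, `θ > 0` and integers `N₁ ≥ N₂ ≥ … ≥ N_r ≥ 1`, the sum
`Σ_{n₁ < N₁} ⋯ Σ_{n_r < N_r} 2^{−θ(maxᵢ nᵢ − minᵢ nᵢ)}` is bounded by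
`C(θ, r) · N₂ ⋯ N_r`, with a constant depending only on `θ` and `r`. -/
theorem sum_two_rpow_max_sub_min_le (θ : ℝ) (hθ : 0 < θ) (r : ℕ) (hr : 2 ≤ r) :
    ∃ C : ℝ, ∀ N : Fin r → ℕ, (∀ i, 1 ≤ N i) → Antitone N →
      ∑ n : ((i : Fin r) → Fin (N i)),
          (2 : ℝ) ^ (-θ * ((((⨆ i, (n i : ℕ)) - (⨅ i, (n i : ℕ)) : ℕ)) : ℝ)) ≤
        C * ∏ i ∈ Finset.univ.erase (⟨0, by omega⟩ : Fin r), (N i : ℝ) := by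
  classical
  set q : ℝ := (2:ℝ) ^ (-θ) with hqdef
  have hq0 : 0 < q := Real.rpow_pos_of_pos two_pos _
  have hq1 : q < 1 := Real.rpow_lt_one_of_one_lt_of_neg one_lt_two (by linarith)
  refine ⟨2 * (1 - q)⁻¹, ?_⟩
  intro N hN _
  set i0 : Fin r := ⟨0, by omega⟩ with hi0
  set i1 : Fin r := ⟨1, by omega⟩ with hi1
  have hi01 : i1 ≠ i0 := by simp [hi0, hi1, Fin.ext_iff]
  set s : Finset (Fin r) := (Finset.univ.erase i0).erase i1 with hs
  set K : ℕ := ∏ i ∈ s, N i with hK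
  -- pointwise bound
  have hpt : ∀ n : (i : Fin r) → Fin (N i),
      (2:ℝ) ^ (-θ * ((((⨆ i, (n i : ℕ)) - (⨅ i, (n i : ℕ)) : ℕ)) : ℝ))
        ≤ q ^ (max (n i0 : ℕ) (n i1 : ℕ) - min (n i0 : ℕ) (n i1 : ℕ)) := by
    intro n
    set d : ℕ := max (n i0 : ℕ) (n i1 : ℕ) - min (n i0 : ℕ) (n i1 : ℕ) with hd
    have hbdd : BddAbove (Set.range fun i => (n i : ℕ)) := (Set.finite_range _).bddAbove
    have hle : ∀ j, (n j : ℕ) ≤ ⨆ i, (n i : ℕ) := fun j => le_ciSup hbdd j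
    have hge : ∀ j, (⨅ i, (n i : ℕ)) ≤ n j := fun j => ciInf_le (OrderBot.bddBelow _) j
    have hdle : d ≤ (⨆ i, (n i : ℕ)) - (⨅ i, (n i : ℕ)) := by
      have h1 := hle i0; have h2 := hle i1; have h3 := hge i0; have h4 := hge i1
      omega
    have step1 : (2:ℝ) ^ (-θ * ((((⨆ i, (n i : ℕ)) - (⨅ i, (n i : ℕ)) : ℕ)) : ℝ))
        ≤ (2:ℝ) ^ (-θ * (d : ℝ)) := by
      apply Real.rpow_le_rpow_of_exponent_le one_le_two
      have : (d:ℝ) ≤ (((⨆ i, (n i : ℕ)) - (⨅ i, (n i : ℕ)) : ℕ) : ℝ) := by exact_mod_cast hdle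
      nlinarith
    have step2 : (2:ℝ) ^ (-θ * (d : ℝ)) = q ^ d := by
      rw [Real.rpow_mul (by norm_num : (0:ℝ) ≤ 2), ← hqdef, Real.rpow_natCast]
    rw [← step2]; exact step1
  have hC0 : (0:ℝ) ≤ 2 * (1 - q)⁻¹ := by
    have : 0 < 1 - q := by linarith
    positivity
  set F : Fin (N i0) × Fin (N i1) → ℝ :=
    fun p => q ^ (max (p.1 : ℕ) (p.2 : ℕ) - min (p.1 : ℕ) (p.2 : ℕ)) with hF
  have hFpos : ∀ p, 0 ≤ F p := fun p => pow_nonneg hq0.le _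
  set g : ((i : Fin r) → Fin (N i)) → Fin (N i0) × Fin (N i1) := fun n => (n i0, n i1) with hg
  -- fiber cardinality bound
  have hcard : ∀ p : Fin (N i0) × Fin (N i1),
      Fintype.card {n : (i : Fin r) → Fin (N i) // g n = p} ≤ K := by
    intro p
    have hinj : Function.Injective
        (fun (n : {n : (i : Fin r) → Fin (N i) // g n = p}) (i : s) => n.1 i) := by
      intro x y h
      ext i
      by_cases h0 : i = i0
      · subst h0
        have hx : x.1 i0 = p.1 := congrArg Prod.fst x.2
        have hy : y.1 i0 = p.1 := congrArg Prod.fst y.2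
        rw [hx, hy]
      · by_cases h1 : i = i1
        · subst h1
          have hx : x.1 i1 = p.2 := congrArg Prod.snd x.2
          have hy : y.1 i1 = p.2 := congrArg Prod.snd y.2
          rw [hx, hy]
        · have hi : i ∈ s := by
            simp [hs, Finset.mem_erase, h0, h1]
          exact congrArg Fin.val (congrFun h ⟨i, hi⟩)
    have := Fintype.card_le_of_injective _ hinj
    calc Fintype.card {n : (i : Fin r) → Fin (N i) // g n = p}
        ≤ Fintype.card ((i : s) → Fin (N i)) := this
      _ = K := by
          rw [Fintype.card_pi]
          simp only [Fintype.card_fin]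
          rw [hK, ← Finset.prod_coe_sort s (fun i => N i)]
  -- sum over fibers
  have hsplit : ∑ n : ((i : Fin r) → Fin (N i)),
      q ^ (max (n i0 : ℕ) (n i1 : ℕ) - min (n i0 : ℕ) (n i1 : ℕ))
      = ∑ p : Fin (N i0) × Fin (N i1),
          (Fintype.card {n : (i : Fin r) → Fin (N i) // g n = p} : ℝ) * F p := by
    rw [← Fintype.sum_fiberwise g
      (fun n => q ^ (max (n i0 : ℕ) (n i1 : ℕ) - min (n i0 : ℕ) (n i1 : ℕ)))]
    refine Finset.sum_congr rfl fun p _ => ?_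
    have : ∀ x : {n : (i : Fin r) → Fin (N i) // g n = p},
        q ^ (max (x.1 i0 : ℕ) (x.1 i1 : ℕ) - min (x.1 i0 : ℕ) (x.1 i1 : ℕ)) = F p := by
      intro x
      have hx1 : x.1 i0 = p.1 := congrArg Prod.fst x.2
      have hx2 : x.1 i1 = p.2 := congrArg Prod.snd x.2
      rw [hF]; rw [hx1, hx2]
    rw [Finset.sum_congr rfl (fun x _ => this x), Finset.sum_const, nsmul_eq_mul]
    rw [Fintype.card]
  -- geometric bound for the double sum
  have hdouble : ∑ p : Fin (N i0) × Fin (N i1), F p ≤ (N i1 : ℝ) * (2 * (1 - q)⁻¹) := by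
    rw [Fintype.sum_prod_type_right]
    calc ∑ b : Fin (N i1), ∑ a : Fin (N i0), F (a, b)
        ≤ ∑ _b : Fin (N i1), 2 * (1 - q)⁻¹ := by
          refine Finset.sum_le_sum fun b _ => ?_
          have : ∑ a : Fin (N i0), F (a, b)
              = ∑ a ∈ Finset.range (N i0), q ^ (max a (b:ℕ) - min a (b:ℕ)) := by
            rw [← Fin.sum_univ_eq_sum_range (fun a => q ^ (max a (b:ℕ) - min a (b:ℕ))) (N i0)]
          rw [this]
          exact geom_aux q hq0.le hq1 (N i0) b
      _ = (N i1 : ℝ) * (2 * (1 - q)⁻¹) := by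
          rw [Finset.sum_const, Finset.card_univ, Fintype.card_fin, nsmul_eq_mul]
  -- put it together
  have hprod : (N i1 : ℝ) * (K : ℝ) = ∏ i ∈ Finset.univ.erase i0, (N i : ℝ) := by
    rw [hK, Nat.cast_prod, ← Finset.mul_prod_erase (Finset.univ.erase i0)
      (fun i => (N i : ℝ)) (Finset.mem_erase.mpr ⟨hi01, Finset.mem_univ i1⟩)]
  calc ∑ n : ((i : Fin r) → Fin (N i)),
        (2 : ℝ) ^ (-θ * ((((⨆ i, (n i : ℕ)) - (⨅ i, (n i : ℕ)) : ℕ)) : ℝ))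
      ≤ ∑ n : ((i : Fin r) → Fin (N i)),
        q ^ (max (n i0 : ℕ) (n i1 : ℕ) - min (n i0 : ℕ) (n i1 : ℕ)) :=
        Finset.sum_le_sum fun n _ => hpt n
    _ = ∑ p : Fin (N i0) × Fin (N i1),
          (Fintype.card {n : (i : Fin r) → Fin (N i) // g n = p} : ℝ) * F p := hsplit
    _ ≤ ∑ p : Fin (N i0) × Fin (N i1), (K : ℝ) * F p := by
        refine Finset.sum_le_sum fun p _ => ?_
        exact mul_le_mul_of_nonneg_right (by exact_mod_cast hcard p) (hFpos p)
    _ = (K : ℝ) * ∑ p : Fin (N i0) × Fin (N i1), F p := by rw [Finset.mul_sum]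
    _ ≤ (K : ℝ) * ((N i1 : ℝ) * (2 * (1 - q)⁻¹)) := by
        exact mul_le_mul_of_nonneg_left hdouble (by positivity)
    _ = 2 * (1 - q)⁻¹ * ∏ i ∈ Finset.univ.erase i0, (N i : ℝ) := by
        rw [← hprod]; ring
end

section
/- Let P be a Markov kernel on a measurable space X (with measurable one-step transition probabilities P(x, ·)), let K be a measurable set, B a measurable set, and ρ, constants such that: (i) P(x, K) ≥ 1/2 for all x ∈ X; (ii) P(v, B) ≥ ρ for all v ∈ K; (iii) ‖P(v, ·) − P(w, ·)‖_TV ≤ 1/2 for all v, w ∈ B. Then for the three-step kernel P³ one has ‖P³(v, ·) − P³(w, ·)‖_TV ≤ 1 − ρ/4 for all v, w ∈ X. -/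
open MeasureTheory ProbabilityTheory
open scoped ENNReal

noncomputable def tvDist {X : Type*} [MeasurableSpace X] (μ ν : Measure X) : ℝ :=
  ⨆ A : {A : Set X // MeasurableSet A}, |(μ A).toReal - (ν A).toReal|

lemma abs_toReal_sub_le_one {X : Type*} [MeasurableSpace X] (μ ν : Measure X)
    [IsProbabilityMeasure μ] [IsProbabilityMeasure ν] (A : Set X) :
    |(μ A).toReal - (ν A).toReal| ≤ 1 := by
  have h1 : (μ A).toReal ≤ 1 := by
    rw [← ENNReal.toReal_one]
    exact ENNReal.toReal_mono ENNReal.one_ne_top prob_le_one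
  have h2 : (ν A).toReal ≤ 1 := by
    rw [← ENNReal.toReal_one]
    exact ENNReal.toReal_mono ENNReal.one_ne_top prob_le_one
  have h3 := ENNReal.toReal_nonneg (a := μ A)
  have h4 := ENNReal.toReal_nonneg (a := ν A)
  rw [abs_sub_le_iff]
  constructor <;> linarith

lemma tvDist_le_one {X : Type*} [MeasurableSpace X] (μ ν : Measure X)
    [IsProbabilityMeasure μ] [IsProbabilityMeasure ν] : tvDist μ ν ≤ 1 := by
  haveI : Nonempty {A : Set X // MeasurableSet A} := ⟨⟨∅, MeasurableSet.empty⟩⟩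
  exact ciSup_le fun A => abs_toReal_sub_le_one μ ν A

lemma abs_le_tvDist {X : Type*} [MeasurableSpace X] (μ ν : Measure X)
    [IsProbabilityMeasure μ] [IsProbabilityMeasure ν] {A : Set X} (hA : MeasurableSet A) :
    |(μ A).toReal - (ν A).toReal| ≤ tvDist μ ν :=
  le_ciSup (f := fun A : {A : Set X // MeasurableSet A} => |(μ A).toReal - (ν A).toReal|)
    ⟨1, by rintro x ⟨A, rfl⟩; exact abs_toReal_sub_le_one μ ν A⟩ ⟨A, hA⟩

/-- Doeblin-type three-step estimate: if `P(x,K) ≥ 1/2` for all `x`, `P(v,B) ≥ ρ` for all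
`v ∈ K`, and `‖P(v,·) − P(w,·)‖_TV ≤ 1/2` for all `v, w ∈ B`, then
`‖P³(v,·) − P³(w,·)‖_TV ≤ 1 − ρ/4` for all `v, w`. -/
theorem doeblin_three_step {X : Type*} [MeasurableSpace X]
    (P : Kernel X X) [IsMarkovKernel P]
    (K B : Set X) (hK : MeasurableSet K) (hB : MeasurableSet B) (ρ : ℝ)
    (h1 : ∀ x : X, (1 / 2 : ℝ≥0∞) ≤ P x K)
    (h2 : ∀ v ∈ K, ENNReal.ofReal ρ ≤ P v B)
    (h3 : ∀ v ∈ B, ∀ w ∈ B, tvDist (P v) (P w) ≤ 1 / 2) :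
    ∀ v w : X, tvDist ((P ∘ₖ P ∘ₖ P) v) ((P ∘ₖ P ∘ₖ P) w) ≤ 1 - ρ / 4 := by
  intro v w
  rcases le_or_gt ρ 0 with hρ | hρ
  · have := tvDist_le_one ((P ∘ₖ P ∘ₖ P) v) ((P ∘ₖ P ∘ₖ P) w)
    linarith
  -- nonemptiness of K and B
  have hKne : K.Nonempty := by
    rcases Set.eq_empty_or_nonempty K with h | h
    · exfalso
      have := h1 v
      rw [h, measure_empty] at this
      simp at this
    · exact h
  obtain ⟨k, hk⟩ := hKne
  have hBne : B.Nonempty := by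
    rcases Set.eq_empty_or_nonempty B with h | h
    · exfalso
      have h2' := h2 k hk
      rw [h, measure_empty, nonpos_iff_eq_zero, ENNReal.ofReal_eq_zero] at h2'
      linarith
    · exact h
  -- two-step measure bound
  have hμB : ∀ u : X, ρ / 2 ≤ (((P ∘ₖ P) u) B).toReal := by
    intro u
    have hle : ENNReal.ofReal (ρ / 2) ≤ ((P ∘ₖ P) u) B := by
      rw [Kernel.comp_apply' _ _ _ hB]
      have e1 : ENNReal.ofReal (ρ / 2) = ENNReal.ofReal ρ * (1 / 2 : ℝ≥0∞) := by
        rw [show (ρ / 2 : ℝ) = ρ * (1 / 2) by ring, ENNReal.ofReal_mul hρ.le]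
        congr 1
        rw [ENNReal.ofReal_div_of_pos (by norm_num)]
        norm_num
      calc ENNReal.ofReal (ρ / 2) = ENNReal.ofReal ρ * (1 / 2 : ℝ≥0∞) := e1
        _ ≤ ENNReal.ofReal ρ * P u K := by gcongr; exact h1 u
        _ = ∫⁻ _ in K, ENNReal.ofReal ρ ∂(P u) := by rw [setLIntegral_const]
        _ ≤ ∫⁻ y in K, P y B ∂(P u) :=
            setLIntegral_mono (P.measurable_coe hB) fun y hy => h2 y hy
        _ ≤ ∫⁻ y, P y B ∂(P u) := setLIntegral_le_lintegral _ _
    calc ρ / 2 = (ENNReal.ofReal (ρ / 2)).toReal := by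
          rw [ENNReal.toReal_ofReal (by linarith)]
      _ ≤ (((P ∘ₖ P) u) B).toReal := ENNReal.toReal_mono (measure_ne_top _ _) hle
  -- key one-sided estimate
  have key : ∀ v' w' : X, ∀ A : Set X, MeasurableSet A →
      (((P ∘ₖ P ∘ₖ P) v') A).toReal - (((P ∘ₖ P ∘ₖ P) w') A).toReal ≤ 1 - ρ / 4 := by
    intro v' w' A hA
    set μ := (P ∘ₖ P) v' with hμdef
    set ν := (P ∘ₖ P) w' with hνdef
    set f : X → ℝ := fun z => (P z A).toReal with hfdef
    have hfm : Measurable f := (P.measurable_coe hA).ennreal_toReal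
    have hf0 : ∀ z, 0 ≤ f z := fun z => ENNReal.toReal_nonneg
    have hf1 : ∀ z, f z ≤ 1 := fun z => by
      rw [hfdef, ← ENNReal.toReal_one]
      exact ENNReal.toReal_mono ENNReal.one_ne_top prob_le_one
    have hrep : ∀ u : X, (((P ∘ₖ P ∘ₖ P) u) A).toReal = ∫ z, f z ∂((P ∘ₖ P) u) := by
      intro u
      rw [Kernel.comp_assoc, Kernel.comp_apply' _ _ _ hA,
        ← integral_toReal ((P.measurable_coe hA).aemeasurable)
          (ae_of_all _ fun z => lt_of_le_of_lt prob_le_one (by norm_num))]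
    -- sup and inf over B
    obtain ⟨z₀, hz₀⟩ := hBne
    have hne : (f '' B).Nonempty := ⟨f z₀, ⟨z₀, hz₀, rfl⟩⟩
    have hbddA : BddAbove (f '' B) := ⟨1, by rintro y ⟨z, _, rfl⟩; exact hf1 z⟩
    have hbddB : BddBelow (f '' B) := ⟨0, by rintro y ⟨z, _, rfl⟩; exact hf0 z⟩
    set M := sSup (f '' B) with hMdef
    set m := sInf (f '' B) with hmdef
    have hM1 : M ≤ 1 := csSup_le hne (by rintro y ⟨z, _, rfl⟩; exact hf1 z)
    have hm0 : 0 ≤ m := le_csInf hne (by rintro y ⟨z, _, rfl⟩; exact hf0 z)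
    have hMm : M ≤ m + 1 / 2 := by
      refine csSup_le hne ?_
      rintro y ⟨z, hz, rfl⟩
      have hzm : f z - 1 / 2 ≤ m := by
        refine le_csInf hne ?_
        rintro y' ⟨z', hz', rfl⟩
        have habs := abs_le_tvDist (P z) (P z') hA
        have htv := h3 z hz z' hz'
        have := abs_le.mp (le_trans habs htv)
        simp only [hfdef]
        linarith [this.2]
      linarith
    -- integrability
    have hint : ∀ (m' : Measure X) [IsProbabilityMeasure m'], Integrable f m' := by
      intro m' _
      refine Integrable.mono' (integrable_const 1) hfm.aestronglyMeasurable
        (ae_of_all _ fun z => ?_)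
      rw [Real.norm_eq_abs, abs_of_nonneg (hf0 z)]
      exact hf1 z
    have hμint : Integrable f μ := hint μ
    have hνint : Integrable f ν := hint ν
    -- upper bound for μ integral
    have hBμ : ∫ z in B, f z ∂μ ≤ M * (μ B).toReal := by
      calc ∫ z in B, f z ∂μ ≤ ∫ _ in B, M ∂μ :=
            setIntegral_mono_on hμint.integrableOn (integrableOn_const (measure_ne_top _ _)) hB (fun z hz => le_csSup hbddA ⟨z, hz, rfl⟩)
        _ = (μ B).toReal * M := by rw [setIntegral_const, smul_eq_mul, measureReal_def]
        _ = M * (μ B).toReal := mul_comm _ _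
    have hcμ : ∫ z in Bᶜ, f z ∂μ ≤ (μ Bᶜ).toReal := by
      calc ∫ z in Bᶜ, f z ∂μ ≤ ∫ _ in Bᶜ, (1 : ℝ) ∂μ :=
            setIntegral_mono_on hμint.integrableOn (integrableOn_const (measure_ne_top _ _)) hB.compl (fun z _ => hf1 z)
        _ = (μ Bᶜ).toReal := by rw [setIntegral_const, smul_eq_mul, mul_one, measureReal_def]
    have hcomplμ : (μ Bᶜ).toReal = 1 - (μ B).toReal := by
      rw [prob_compl_eq_one_sub hB,
        ENNReal.toReal_sub_of_le prob_le_one ENNReal.one_ne_top, ENNReal.toReal_one]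
    have hμup : ∫ z, f z ∂μ ≤ M * (μ B).toReal + (1 - (μ B).toReal) := by
      rw [← integral_add_compl hB hμint]
      rw [hcomplμ] at hcμ
      linarith
    -- lower bound for ν integral
    have hBν : m * (ν B).toReal ≤ ∫ z in B, f z ∂ν := by
      calc m * (ν B).toReal = (ν B).toReal * m := mul_comm _ _
        _ = ∫ _ in B, m ∂ν := by rw [setIntegral_const, smul_eq_mul, measureReal_def]
        _ ≤ ∫ z in B, f z ∂ν :=
            setIntegral_mono_on (integrableOn_const (measure_ne_top _ _))
              hνint.integrableOn hB (fun z hz => csInf_le hbddB ⟨z, hz, rfl⟩)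
    have hcν : 0 ≤ ∫ z in Bᶜ, f z ∂ν := setIntegral_nonneg hB.compl fun z _ => hf0 z
    have hνlo : m * (ν B).toReal ≤ ∫ z, f z ∂ν := by
      rw [← integral_add_compl hB hνint]
      linarith
    -- combine
    have ha : ρ / 2 ≤ (μ B).toReal := hμB v'
    have hb : ρ / 2 ≤ (ν B).toReal := hμB w'
    have ha1 : (μ B).toReal ≤ 1 := by
      rw [← ENNReal.toReal_one]
      exact ENNReal.toReal_mono ENNReal.one_ne_top prob_le_one
    rw [hrep v', hrep w']
    have hprod1 : 0 ≤ ((μ B).toReal - ρ / 2) * (1 - M) :=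
      mul_nonneg (by linarith) (by linarith)
    have hprod2 : 0 ≤ ((ν B).toReal - ρ / 2) * m :=
      mul_nonneg (by linarith) hm0
    have hprod3 : 0 ≤ ρ * (m + 1 / 2 - M) := mul_nonneg hρ.le (by linarith)
    nlinarith [hμup, hνlo]
  -- conclude
  haveI : Nonempty {A : Set X // MeasurableSet A} := ⟨⟨∅, MeasurableSet.empty⟩⟩
  refine ciSup_le ?_
  rintro ⟨A, hA⟩
  exact abs_sub_le_iff.mpr ⟨key v w A hA, key w v A hA⟩
end
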